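/- Let M be a von Neumann algebra on a complex Hilbert space H with commutant M', and let γ ∈ H. Let p be the orthogonal projection of H onto the closure of {x' γ : x' ∈ M'} and p' the orthogonal projection onto the closure of {x γ : x ∈ M}. Suppose a ∈ M' and b ∈ M satisfy (p' ∘ a ∘ p')* = −(p' ∘ a ∘ p') and (p ∘ b ∘ p)* = −(p ∘ b ∘ p). Then the imaginary part of ⟪a γ, b γ⟫ vanishes. (This is the symplectic orthogonality of the tangent spaces to the fibres of the expectation maps E and E' through γ, Proposition 4.10.) -/

import Mathlib

section Aux

variable {H : Type*} [NormedAddCommGroup H] [InnerProductSpace ℂ H] [CompleteSpace H]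

private lemma proj_fix' {K : Submodule ℂ H} {p : H →L[ℂ] H}
    (hp : ∀ ξ : H, p ξ ∈ K ∧ ξ - p ξ ∈ Kᗮ) {ζ : H} (hζ : ζ ∈ K) : p ζ = ζ := by
  have h1 : ζ - p ζ ∈ K := sub_mem hζ (hp ζ).1
  have h2 : ζ - p ζ ∈ Kᗮ := (hp ζ).2
  have h3 : ζ - p ζ ∈ (⊥ : Submodule ℂ H) := K.orthogonal_disjoint.le_bot ⟨h1, h2⟩
  exact (sub_eq_zero.mp ((Submodule.mem_bot ℂ).mp h3)).symm

private lemma proj_unique' {K : Submodule ℂ H} {p : H →L[ℂ] H}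
    (hp : ∀ ξ : H, p ξ ∈ K ∧ ξ - p ξ ∈ Kᗮ) {ξ k : H} (hk : k ∈ K) (ho : ξ - k ∈ Kᗮ) :
    p ξ = k := by
  have h1 : p ξ - k ∈ K := sub_mem (hp ξ).1 hk
  have h2 : p ξ - k ∈ Kᗮ := by
    have e : p ξ - k = (ξ - k) - (ξ - p ξ) := by abel
    rw [e]; exact sub_mem ho (hp ξ).2
  have h3 : p ξ - k ∈ (⊥ : Submodule ℂ H) := K.orthogonal_disjoint.le_bot ⟨h1, h2⟩
  exact sub_eq_zero.mp ((Submodule.mem_bot ℂ).mp h3)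

private lemma proj_sa' {K : Submodule ℂ H} {p : H →L[ℂ] H}
    (hp : ∀ ξ : H, p ξ ∈ K ∧ ξ - p ξ ∈ Kᗮ) (ξ η : H) :
    (inner ℂ (p ξ) η : ℂ) = inner ℂ ξ (p η) := by
  have h1 : (inner ℂ (p ξ) (η - p η) : ℂ) = 0 :=
    (Submodule.mem_orthogonal K _).mp (hp η).2 _ (hp ξ).1
  have h2 : (inner ℂ (ξ - p ξ) (p η) : ℂ) = 0 :=
    (Submodule.mem_orthogonal' K _).mp (hp ξ).2 _ (hp η).1
  rw [inner_sub_right, sub_eq_zero] at h1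
  rw [inner_sub_left, sub_eq_zero] at h2
  rw [h1, ← h2]

private lemma span_closure_inv' {S : Set H} (T : H →L[ℂ] H)
    (hT : ∀ v ∈ S, T v ∈ S) {ζ : H}
    (hζ : ζ ∈ (Submodule.span ℂ S).topologicalClosure) :
    T ζ ∈ (Submodule.span ℂ S).topologicalClosure := by
  have hmap : ∀ w ∈ Submodule.span ℂ S, T w ∈ Submodule.span ℂ S := by
    intro w hw
    have hle : Submodule.span ℂ S ≤ (Submodule.span ℂ S).comap (T : H →ₗ[ℂ] H) := by
      rw [Submodule.span_le]
      intro v hv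
      exact Submodule.subset_span (hT v hv)
    exact hle hw
  rw [← SetLike.mem_coe, Submodule.topologicalClosure_coe] at hζ ⊢
  exact map_mem_closure T.continuous hζ hmap

end Aux

/-- Symplectic orthogonality of the tangent spaces to the fibres of the
expectation maps E and E' through γ (Proposition 4.10). -/
theorem stmt7 {H : Type*} [NormedAddCommGroup H] [InnerProductSpace ℂ H]
    [CompleteSpace H]
    (M : VonNeumannAlgebra H) (γ : H)
    (K K' : Submodule ℂ H)
    (hK : K = (Submodule.span ℂ
      {v : H | ∃ x' : H →L[ℂ] H, x' ∈ M.commutant ∧ v = x' γ}).topologicalClosure)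
    (hK' : K' = (Submodule.span ℂ
      {v : H | ∃ x : H →L[ℂ] H, x ∈ M ∧ v = x γ}).topologicalClosure)
    (p p' : H →L[ℂ] H)
    (hp : ∀ ξ : H, p ξ ∈ K ∧ ξ - p ξ ∈ Kᗮ)
    (hp' : ∀ ξ : H, p' ξ ∈ K' ∧ ξ - p' ξ ∈ K'ᗮ)
    (a b : H →L[ℂ] H) (ha : a ∈ M.commutant) (hb : b ∈ M)
    (haSkew : ContinuousLinearMap.adjoint (p' ∘L a ∘L p') = -(p' ∘L a ∘L p'))
    (hbSkew : ContinuousLinearMap.adjoint (p ∘L b ∘L p) = -(p ∘L b ∘L p)) :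
    (inner ℂ (a γ) (b γ) : ℂ).im = 0 := by
  -- memberships in K and K'
  have hKmem : ∀ x' : H →L[ℂ] H, x' ∈ M.commutant → x' γ ∈ K := by
    intro x' hx'
    rw [hK]
    exact Submodule.le_topologicalClosure _ (Submodule.subset_span ⟨x', hx', rfl⟩)
  have hK'mem : ∀ x : H →L[ℂ] H, x ∈ M → x γ ∈ K' := by
    intro x hx
    rw [hK']
    exact Submodule.le_topologicalClosure _ (Submodule.subset_span ⟨x, hx, rfl⟩)
  have hγK : γ ∈ K := by
    have := hKmem 1 (one_mem _)
    simpa using this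
  have hγK' : γ ∈ K' := by
    have := hK'mem 1 (one_mem _)
    simpa using this
  -- invariance of K under M.commutant and of K' under M
  have hKinv : ∀ g : H →L[ℂ] H, g ∈ M.commutant → ∀ ζ ∈ K, g ζ ∈ K := by
    intro g hg ζ hζ
    rw [hK] at hζ ⊢
    refine span_closure_inv' g ?_ hζ
    rintro v ⟨x', hx', rfl⟩
    exact ⟨g * x', mul_mem hg hx', rfl⟩
  have hK'inv : ∀ g : H →L[ℂ] H, g ∈ M → ∀ ζ ∈ K', g ζ ∈ K' := by
    intro g hg ζ hζ
    rw [hK'] at hζ ⊢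
    refine span_closure_inv' g ?_ hζ
    rintro v ⟨x, hx, rfl⟩
    exact ⟨g * x, mul_mem hg hx, rfl⟩
  -- invariance of the orthogonal complements
  have hKperp : ∀ g : H →L[ℂ] H, g ∈ M.commutant → ∀ w ∈ Kᗮ, g w ∈ Kᗮ := by
    intro g hg w hw
    rw [Submodule.mem_orthogonal]
    intro u hu
    have hadj : ContinuousLinearMap.adjoint g ∈ M.commutant := by
      rw [← ContinuousLinearMap.star_eq_adjoint]; exact star_mem hg
    rw [← ContinuousLinearMap.adjoint_inner_left]
    exact (Submodule.mem_orthogonal K w).mp hw _ (hKinv _ hadj u hu)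
  have hK'perp : ∀ g : H →L[ℂ] H, g ∈ M → ∀ w ∈ K'ᗮ, g w ∈ K'ᗮ := by
    intro g hg w hw
    rw [Submodule.mem_orthogonal]
    intro u hu
    have hadj : ContinuousLinearMap.adjoint g ∈ M := by
      rw [← ContinuousLinearMap.star_eq_adjoint]; exact star_mem hg
    rw [← ContinuousLinearMap.adjoint_inner_left]
    exact (Submodule.mem_orthogonal K' w).mp hw _ (hK'inv _ hadj u hu)
  -- p' lies in the commutant, p lies in M
  have hp'C : p' ∈ M.commutant := by
    rw [VonNeumannAlgebra.mem_commutant_iff]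
    intro g hg
    ext ξ
    show g (p' ξ) = p' (g ξ)
    refine (proj_unique' hp' (hK'inv g hg _ (hp' ξ).1) ?_).symm
    rw [← map_sub]
    exact hK'perp g hg _ (hp' ξ).2
  have hpM : p ∈ M := by
    rw [← VonNeumannAlgebra.commutant_commutant M,
      VonNeumannAlgebra.mem_commutant_iff]
    intro g hg
    ext ξ
    show g (p ξ) = p (g ξ)
    refine (proj_unique' hp (hKinv g hg _ (hp ξ).1) ?_).symm
    rw [← map_sub]
    exact hKperp g hg _ (hp ξ).2
  -- the compressed operators
  set A : H →L[ℂ] H := p' ∘L a ∘L p' with hAdef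
  set B : H →L[ℂ] H := p ∘L b ∘L p with hBdef
  have hA : A ∈ M.commutant := by
    have : A = p' * (a * p') := rfl
    rw [this]
    exact mul_mem hp'C (mul_mem ha hp'C)
  have hB : B ∈ M := by
    have : B = p * (b * p) := rfl
    rw [this]
    exact mul_mem hpM (mul_mem hb hpM)
  have hcomm : B * A = A * B := VonNeumannAlgebra.mem_commutant_iff.mp hA B hB
  -- pointwise facts
  have hpγ : p γ = γ := proj_fix' hp hγK
  have hp'γ : p' γ = γ := proj_fix' hp' hγK'
  have haγK : a γ ∈ K := hKmem a ha
  have hbγK' : b γ ∈ K' := hK'mem b hb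
  have hAγ : A γ = p' (a γ) := by
    show p' (a (p' γ)) = p' (a γ)
    rw [hp'γ]
  have hBγ : B γ = p (b γ) := by
    show p (b (p γ)) = p (b γ)
    rw [hpγ]
  have hAγK : A γ ∈ K := hKmem A hA
  have hBγK' : B γ ∈ K' := hK'mem B hB
  -- step 1 : ⟪Aγ, Bγ⟫ = ⟪aγ, bγ⟫
  have step1 : (inner ℂ (A γ) (B γ) : ℂ) = inner ℂ (a γ) (b γ) := by
    calc (inner ℂ (A γ) (B γ) : ℂ)
        = inner ℂ (A γ) (p (b γ)) := by rw [hBγ]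
      _ = inner ℂ (p (A γ)) (b γ) := (proj_sa' hp (A γ) (b γ)).symm
      _ = inner ℂ (A γ) (b γ) := by rw [proj_fix' hp hAγK]
      _ = inner ℂ (p' (a γ)) (b γ) := by rw [hAγ]
      _ = inner ℂ (a γ) (p' (b γ)) := proj_sa' hp' (a γ) (b γ)
      _ = inner ℂ (a γ) (b γ) := by rw [proj_fix' hp' hbγK']
  -- step 2 : ⟪Aγ, Bγ⟫ is real (self-conjugate)
  have step2 : (inner ℂ (A γ) (B γ) : ℂ) = inner ℂ (B γ) (A γ) := by
    calc (inner ℂ (A γ) (B γ) : ℂ)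
        = inner ℂ γ (ContinuousLinearMap.adjoint A (B γ)) :=
          (ContinuousLinearMap.adjoint_inner_right A γ (B γ)).symm
      _ = inner ℂ γ ((-A) (B γ)) := by rw [haSkew]
      _ = -inner ℂ γ (A (B γ)) := by rw [ContinuousLinearMap.neg_apply, inner_neg_right]
      _ = -inner ℂ γ ((A * B) γ) := by rfl
      _ = -inner ℂ γ ((B * A) γ) := by rw [hcomm]
      _ = -inner ℂ γ (B (A γ)) := by rfl
      _ = -inner ℂ (ContinuousLinearMap.adjoint B γ) (A γ) := by
          rw [ContinuousLinearMap.adjoint_inner_left]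
      _ = -inner ℂ ((-B) γ) (A γ) := by rw [hbSkew]
      _ = inner ℂ (B γ) (A γ) := by
          rw [ContinuousLinearMap.neg_apply, inner_neg_left, neg_neg]
  have hconj : (starRingEnd ℂ) (inner ℂ (a γ) (b γ) : ℂ) = inner ℂ (a γ) (b γ) := by
    rw [← step1, inner_conj_symm, ← step2]
  exact Complex.conj_eq_iff_im.mp hconj
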